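/- Let d = 2^p. A permutation σ is obtainable from the identity in at most p steps in the whole genome duplication - random loss model if and only if σ avoids every minimal permutation with d descents, i.e., no permutation π with desc(π) = d all of whose proper patterns have fewer than d descents is a pattern of σ. Moreover, the set B_d of minimal permutations with d descents is finite. -/

import Mathlib

/-- `σ` has a descent at (0-based) position `i`, i.e. `σ i > σ (i+1)`. -/
def IsDescentAt {n : ℕ} (σ : Equiv.Perm (Fin n)) (i : ℕ) : Prop :=
  ∃ h : i + 1 < n, σ ⟨i + 1, h⟩ < σ ⟨i, Nat.lt_of_succ_lt h⟩

/-- The number of descents of `σ`. -/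
noncomputable def descNum {n : ℕ} (σ : Equiv.Perm (Fin n)) : ℕ :=
  {i : ℕ | IsDescentAt σ i}.ncard

/-- `π` is a pattern of `σ` (written `π ≺ σ`). -/
def IsPattern {k n : ℕ} (π : Equiv.Perm (Fin k)) (σ : Equiv.Perm (Fin n)) : Prop :=
  ∃ f : Fin k ↪o Fin n, ∀ ℓ m : Fin k, π ℓ < π m → σ (f ℓ) < σ (f m)

/-- `σ` is a minimal permutation with `d` descents: it has `d` descents and every
pattern `π ≺ σ` with `π ≠ σ` (equivalently, of strictly smaller size) has fewer
than `d` descents. -/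
def MinimalWithDescents (d : ℕ) {n : ℕ} (σ : Equiv.Perm (Fin n)) : Prop :=
  descNum σ = d ∧
    ∀ (k : ℕ) (π : Equiv.Perm (Fin k)), k < n → IsPattern π σ → descNum π < d

/-- One step of the whole genome duplication - random loss model. -/
def DLStep {n : ℕ} (σ σ' : Equiv.Perm (Fin n)) : Prop :=
  ∃ (m : ℕ) (τ : Equiv.Perm (Fin n)),
    (∀ i j : Fin n, (i : ℕ) < m → (j : ℕ) < m → i < j → τ i < τ j) ∧
    (∀ i j : Fin n, m ≤ (i : ℕ) → m ≤ (j : ℕ) → i < j → τ i < τ j) ∧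
    ∀ i, σ' i = σ (τ i)

/-- `σ` is obtainable from the identity permutation in at most `p` duplication-loss steps. -/
def ObtainableIn {n : ℕ} (p : ℕ) (σ : Equiv.Perm (Fin n)) : Prop :=
  ∃ (q : ℕ) (c : ℕ → Equiv.Perm (Fin n)), q ≤ p ∧ c 0 = 1 ∧ c q = σ ∧
    ∀ i, i < q → DLStep (c i) (c (i + 1))

noncomputable def descFinset {n : ℕ} (σ : Equiv.Perm (Fin n)) : Finset ℕ :=
  letI := Classical.decPred (IsDescentAt σ)
  (Finset.range n).filter (IsDescentAt σ)

lemma mem_descFinset {n : ℕ} {σ : Equiv.Perm (Fin n)} {i : ℕ} :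
    i ∈ descFinset σ ↔ IsDescentAt σ i := by
  classical
  simp only [descFinset, Finset.mem_filter, Finset.mem_range]
  refine ⟨fun h => h.2, fun h => ⟨?_, h⟩⟩
  obtain ⟨hl, -⟩ := h; omega

lemma descNum_eq_card {n : ℕ} (σ : Equiv.Perm (Fin n)) :
    descNum σ = (descFinset σ).card := by
  rw [descNum, ← Set.ncard_coe_finset]
  congr 1; ext i; simp [mem_descFinset]

lemma no_descent_mono {n : ℕ} (σ : Equiv.Perm (Fin n)) :
    ∀ (k a : ℕ) (ha : a + k < n),
      (∀ c, a ≤ c → c < a + k → ¬ IsDescentAt σ c) →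
      σ ⟨a, by omega⟩ ≤ σ ⟨a + k, ha⟩ := by
  intro k
  induction k with
  | zero => intro a ha h; exact le_refl _
  | succ k ih =>
    intro a ha h
    have h1 : σ ⟨a, by omega⟩ ≤ σ ⟨a + k, by omega⟩ :=
      ih a (by omega) (fun c hc hc' => h c hc (by omega))
    have h2 : ¬ IsDescentAt σ (a + k) := h _ (by omega) (by omega)
    have h3 : ¬ (σ ⟨a + k + 1, by omega⟩ < σ ⟨a + k, by omega⟩) := fun hlt => h2 ⟨by omega, hlt⟩
    exact le_trans h1 (le_of_not_gt h3)

lemma lt_of_no_descent {n : ℕ} (σ : Equiv.Perm (Fin n)) {a b : Fin n} (hab : a < b)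
    (h : ∀ c, (a : ℕ) ≤ c → c < (b : ℕ) → ¬ IsDescentAt σ c) : σ a < σ b := by
  have hab' : (a : ℕ) < (b : ℕ) := hab
  have hb : (a : ℕ) + ((b : ℕ) - (a : ℕ)) < n := by omega
  have := no_descent_mono σ ((b : ℕ) - (a : ℕ)) (a : ℕ) hb
    (fun c hc hc' => h c hc (by omega))
  have ha' : (⟨(a : ℕ), by omega⟩ : Fin n) = a := by ext; rfl
  have hb' : (⟨(a : ℕ) + ((b : ℕ) - (a : ℕ)), hb⟩ : Fin n) = b := by ext; simp; omega
  rw [ha', hb'] at this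
  exact lt_of_le_of_ne this (fun he => absurd (σ.injective he) (ne_of_lt hab))

lemma exists_descent_between {n : ℕ} (σ : Equiv.Perm (Fin n)) {a b : Fin n} (hab : a < b)
    (hv : σ b < σ a) : ∃ c, (a : ℕ) ≤ c ∧ c < (b : ℕ) ∧ IsDescentAt σ c := by
  by_contra hcon
  push_neg at hcon
  exact absurd (lt_of_no_descent σ hab (fun c hc hc' h => hcon c hc hc' h)) (not_lt.mpr hv.le)

lemma card_le_of_exists_between {n : ℕ} (σ : Equiv.Perm (Fin n)) (s : Finset ℕ)
    (L R : ℕ → ℕ)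
    (hLR : ∀ i ∈ s, ∃ c, L i ≤ c ∧ c < R i ∧ IsDescentAt σ c)
    (hsep : ∀ i ∈ s, ∀ j ∈ s, i < j → R i ≤ L j) :
    s.card ≤ (descFinset σ).card := by
  classical
  choose g hg1 hg2 hg3 using hLR
  refine Finset.card_le_card_of_injOn (fun i => if h : i ∈ s then g i h else 0) ?_ ?_
  · intro i hi; rw [Finset.mem_coe] at hi; simp only [hi, dif_pos]; exact mem_descFinset.mpr (hg3 i hi)
  · intro i hi j hj hij
    simp only [Finset.mem_coe] at hi hj
    simp only [hi, hj, dif_pos] at hij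
    by_contra hne
    rcases lt_or_gt_of_ne hne with h | h
    · have : g i hi < g j hj :=
        lt_of_lt_of_le (hg2 i hi) (le_trans (hsep i hi j hj h) (hg1 j hj))
      omega
    · have : g j hj < g i hi :=
        lt_of_lt_of_le (hg2 j hj) (le_trans (hsep j hj i hi h) (hg1 i hi))
      omega

lemma nat_ivt (F : ℕ → ℕ) (h0 : F 0 = 0) (hs : ∀ k, F (k + 1) ≤ F k + 1) :
    ∀ n j, j ≤ F n → ∃ k, k ≤ n ∧ F k = j := by
  intro n
  induction n with
  | zero => intro j hj; exact ⟨0, le_refl _, by omega⟩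
  | succ n ih =>
    intro j hj
    by_cases h : j ≤ F n
    · obtain ⟨k, hk, hfk⟩ := ih j h
      exact ⟨k, by omega, hfk⟩
    · exact ⟨n + 1, le_refl _, by have := hs n; omega⟩

lemma exists_std {k n : ℕ} (v : Fin k → Fin n) (hv : Function.Injective v) :
    ∃ π : Equiv.Perm (Fin k), ∀ ℓ m, π ℓ < π m ↔ v ℓ < v m := by
  set φ := Tuple.sort v with hφ
  have hmono : Monotone (v ∘ φ) := Tuple.monotone_sort v
  have hsm : StrictMono (v ∘ φ) := hmono.strictMono_of_injective (hv.comp φ.injective)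
  refine ⟨φ⁻¹, fun ℓ m => ?_⟩
  calc φ⁻¹ ℓ < φ⁻¹ m ↔ (v ∘ φ) (φ⁻¹ ℓ) < (v ∘ φ) (φ⁻¹ m) := hsm.lt_iff_lt.symm
    _ ↔ v ℓ < v m := by
        simp only [Function.comp_apply, Equiv.Perm.inv_def, Equiv.apply_symm_apply]

lemma pattern_of_emb {k n : ℕ} (σ : Equiv.Perm (Fin n)) (f : Fin k ↪o Fin n) :
    ∃ π : Equiv.Perm (Fin k), IsPattern π σ ∧
      ∀ ℓ m : Fin k, π ℓ < π m ↔ σ (f ℓ) < σ (f m) := by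
  obtain ⟨π, hπ⟩ := exists_std (fun ℓ => σ (f ℓ)) (σ.injective.comp f.injective)
  exact ⟨π, ⟨f, fun ℓ m h => (hπ ℓ m).mp h⟩, hπ⟩

lemma descNum_one (n : ℕ) : descNum (1 : Equiv.Perm (Fin n)) = 0 := by
  rw [descNum_eq_card]
  rw [Finset.card_eq_zero]
  ext i
  simp only [mem_descFinset, Finset.notMem_empty, iff_false]
  rintro ⟨h, hlt⟩
  simp only [Equiv.Perm.coe_one, id_eq, Fin.mk_lt_mk] at hlt
  omega

lemma eq_one_of_descNum_zero {n : ℕ} (σ : Equiv.Perm (Fin n)) (h : descNum σ = 0) :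
    σ = 1 := by
  rw [descNum_eq_card, Finset.card_eq_zero] at h
  have hnd : ∀ i, ¬ IsDescentAt σ i := by
    intro i hi
    have := mem_descFinset.mpr hi
    rw [h] at this
    exact absurd this (Finset.notMem_empty _)
  have hsm : StrictMono σ := by
    intro a b hab
    exact lt_of_no_descent σ hab (fun c _ _ => hnd c)
  have hsm' : Monotone (σ.symm) := by
    intro a b hab
    by_contra hc
    push_neg at hc
    have := hsm hc
    simp only [Equiv.apply_symm_apply] at this
    exact absurd (lt_of_lt_of_le this hab) (lt_irrefl _)
  have : σ.toOrderIso hsm.monotone hsm' = OrderIso.refl (Fin n) := Subsingleton.elim _ _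
  ext i
  have := congrArg (fun e => (e : Fin n ≃o Fin n) i) this
  have h2 : σ i = i := by simpa using this
  exact congrArg Fin.val h2

lemma descNum_le_of_pattern {k n : ℕ} {π : Equiv.Perm (Fin k)} {σ : Equiv.Perm (Fin n)}
    (h : IsPattern π σ) : descNum π ≤ descNum σ := by
  classical
  obtain ⟨f, hf⟩ := h
  rw [descNum_eq_card, descNum_eq_card]
  set L : ℕ → ℕ := fun i => if h : i < k then (f ⟨i, h⟩ : ℕ) else 0 with hL
  apply card_le_of_exists_between σ _ L (fun i => L (i + 1))
  · intro i hi
    obtain ⟨hik, hlt⟩ := mem_descFinset.mp hi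
    have hik' : i < k := by omega
    have hfi : f ⟨i, hik'⟩ < f ⟨i + 1, hik⟩ := f.strictMono (by simp [Fin.lt_def])
    have hσ : σ (f ⟨i + 1, hik⟩) < σ (f ⟨i, hik'⟩) := hf _ _ hlt
    obtain ⟨c, hc1, hc2, hc3⟩ := exists_descent_between σ hfi hσ
    refine ⟨c, ?_, ?_, hc3⟩
    · rw [hL]; simp only [hik', dif_pos]; exact hc1
    · rw [hL]; simp only [hik, dif_pos]; exact hc2
  · intro i hi j hj hij
    obtain ⟨hik, -⟩ := mem_descFinset.mp hi
    obtain ⟨hjk, -⟩ := mem_descFinset.mp hj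
    have hjk' : j < k := by omega
    rw [hL]; simp only [hik, hjk', dif_pos]
    exact f.monotone (by simp [Fin.le_def]; omega)

lemma IsPattern.trans {k j n : ℕ} {π : Equiv.Perm (Fin k)} {ρ : Equiv.Perm (Fin j)}
    {σ : Equiv.Perm (Fin n)} (h1 : IsPattern π ρ) (h2 : IsPattern ρ σ) : IsPattern π σ := by
  obtain ⟨f, hf⟩ := h1
  obtain ⟨g, hg⟩ := h2
  exact ⟨f.trans g, fun ℓ m h => hg _ _ (hf ℓ m h)⟩

lemma exists_pattern_with_descNum {n : ℕ} (σ : Equiv.Perm (Fin n)) {j : ℕ}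
    (hj : j ≤ descNum σ) :
    ∃ (k : ℕ) (π : Equiv.Perm (Fin k)), IsPattern π σ ∧ descNum π = j := by
  classical
  set D := descFinset σ with hD
  set F : ℕ → ℕ := fun k => (D.filter (fun i => i + 1 < k)).card with hF
  have h0 : F 0 = 0 := by
    rw [hF]; simp
  have hs : ∀ k, F (k + 1) ≤ F k + 1 := by
    intro k
    have hsub : D.filter (fun i => i + 1 < k + 1) ⊆
        insert (k - 1) (D.filter (fun i => i + 1 < k)) := by
      intro i hi
      simp only [Finset.mem_filter, Finset.mem_insert] at hi ⊢
      rcases Nat.lt_or_ge (i + 1) k with h | h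
      · exact Or.inr ⟨hi.1, h⟩
      · left; omega
    calc F (k + 1) ≤ (insert (k - 1) (D.filter (fun i => i + 1 < k))).card :=
          Finset.card_le_card hsub
      _ ≤ F k + 1 := Finset.card_insert_le _ _
  have hFn : descNum σ ≤ F n := by
    rw [descNum_eq_card]
    apply Finset.card_le_card
    intro i hi
    simp only [hF, Finset.mem_filter]
    exact ⟨hi, (mem_descFinset.mp hi).fst⟩
  obtain ⟨k, hkn, hFk⟩ := nat_ivt F h0 hs n j (le_trans hj hFn)
  obtain ⟨π, hπ, hiff⟩ := pattern_of_emb σ (Fin.castLEOrderEmb hkn)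
  refine ⟨k, π, hπ, ?_⟩
  rw [descNum_eq_card, ← hFk]
  congr 1
  ext i
  simp only [mem_descFinset, Finset.mem_filter, hF]
  constructor
  · rintro ⟨hik, hlt⟩
    have h2 := (hiff ⟨i + 1, hik⟩ ⟨i, by omega⟩).mp hlt
    refine ⟨mem_descFinset.mpr ⟨by omega, ?_⟩, hik⟩
    exact h2
  · rintro ⟨hiD, hik⟩
    obtain ⟨hin, hlt⟩ := mem_descFinset.mp hiD
    exact ⟨hik, (hiff ⟨i + 1, hik⟩ ⟨i, by omega⟩).mpr hlt⟩

lemma exists_minimal_pattern {n : ℕ} (σ : Equiv.Perm (Fin n)) {d : ℕ}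
    (hd : d ≤ descNum σ) :
    ∃ (k : ℕ) (π : Equiv.Perm (Fin k)), MinimalWithDescents d π ∧ IsPattern π σ := by
  classical
  have hex : ∃ k : ℕ, ∃ π : Equiv.Perm (Fin k), IsPattern π σ ∧ descNum π = d := by
    obtain ⟨k, π, h1, h2⟩ := exists_pattern_with_descNum σ hd
    exact ⟨k, π, h1, h2⟩
  obtain ⟨π0, hπ0, hdesc⟩ := Nat.find_spec hex
  refine ⟨Nat.find hex, π0, ⟨hdesc, ?_⟩, hπ0⟩
  intro k π hk hpat
  have h1 : descNum π ≤ d := hdesc ▸ descNum_le_of_pattern hpat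
  rcases lt_or_eq_of_le h1 with h | h
  · exact h
  · exact absurd ⟨π, hpat.trans hπ0, h⟩ (Nat.find_min hex hk)

lemma size_le_of_minimal {d n : ℕ} (hd : 1 ≤ d) (π : Equiv.Perm (Fin n))
    (h : MinimalWithDescents d π) : n ≤ 2 * d := by
  by_contra hn
  push_neg at hn
  obtain ⟨hdesc, hmin⟩ := h
  obtain ⟨N, rfl⟩ : ∃ N, n = N + 1 := ⟨n - 1, by omega⟩
  classical
  set D := descFinset π with hD
  have hcard : D.card = d := by rw [hD, ← descNum_eq_card, hdesc]
  set T : Finset ℕ := D ∪ D.image (· + 1) with hT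
  have hTcard : T.card ≤ 2 * d := by
    have h1 : T.card ≤ D.card + (D.image (· + 1)).card := by
      rw [hT]; exact Finset.card_union_le _ _
    have h2 := Finset.card_image_le (s := D) (f := (· + 1))
    omega
  have hex : ∃ j ∈ Finset.range (N + 1), j ∉ T := by
    by_contra hc
    push_neg at hc
    have hsub : Finset.range (N + 1) ⊆ T := fun j hj => hc j hj
    have := Finset.card_le_card hsub
    simp only [Finset.card_range] at this
    omega
  obtain ⟨j, hjr, hjT⟩ := hex
  have hjn : j < N + 1 := Finset.mem_range.mp hjr
  have hjD : ¬ IsDescentAt π j := fun hh => hjT (Finset.mem_union_left _ (mem_descFinset.mpr hh))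
  have hjD' : ∀ i, IsDescentAt π i → i + 1 ≠ j := by
    intro i hi he
    exact hjT (Finset.mem_union_right _ (Finset.mem_image.mpr ⟨i, mem_descFinset.mpr hi, he⟩))
  obtain ⟨π', hpat, hiff⟩ := pattern_of_emb π (Fin.succAboveOrderEmb ⟨j, hjn⟩)
  have hπ'lt : descNum π' < d := hmin N π' (by omega) hpat
  have hinj : D.card ≤ (descFinset π').card := by
    apply Finset.card_le_card_of_injOn (fun i => if i < j then i else i - 1)
    · intro i hiD
      obtain ⟨hin, hlt2⟩ := mem_descFinset.mp hiD
      have hij : i ≠ j := fun he => hjD (he ▸ mem_descFinset.mp hiD)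
      have hi1j : i + 1 ≠ j := hjD' i (mem_descFinset.mp hiD)
      rcases lt_or_gt_of_ne hij with hlt3 | hgt
      · have hi1 : i + 1 < j := by omega
        beta_reduce; rw [if_pos hlt3]
        apply mem_descFinset.mpr
        refine ⟨by omega, ?_⟩
        apply (hiff ⟨i + 1, by omega⟩ ⟨i, by omega⟩).mpr
        rw [Fin.succAboveOrderEmb_apply, Fin.succAboveOrderEmb_apply,
          Fin.succAbove_of_castSucc_lt _ _ (by simp [Fin.lt_def]; omega),
          Fin.succAbove_of_castSucc_lt _ _ (by simp [Fin.lt_def]; omega)]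
        exact hlt2
      · have hi1 : j < i := hgt
        have hiN : i < N := by omega
        beta_reduce; rw [if_neg (by omega)]
        apply mem_descFinset.mpr
        refine ⟨by omega, ?_⟩
        apply (hiff ⟨i - 1 + 1, by omega⟩ ⟨i - 1, by omega⟩).mpr
        rw [Fin.succAboveOrderEmb_apply, Fin.succAboveOrderEmb_apply,
          Fin.succAbove_of_le_castSucc _ _ (by simp [Fin.le_def]; omega),
          Fin.succAbove_of_le_castSucc _ _ (by simp [Fin.le_def]; omega)]
        have e1 : Fin.succ ⟨i - 1 + 1, by omega⟩ = (⟨i + 1, by omega⟩ : Fin (N + 1)) := by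
          ext; simp; omega
        have e2 : Fin.succ ⟨i - 1, by omega⟩ = (⟨i, by omega⟩ : Fin (N + 1)) := by
          ext; simp; omega
        rw [e1, e2]
        exact hlt2
    · intro a ha b hb hab
      rw [Finset.mem_coe] at ha hb
      have haj : a ≠ j := fun he => hjD (he ▸ mem_descFinset.mp ha)
      have hbj : b ≠ j := fun he => hjD (he ▸ mem_descFinset.mp hb)
      simp only at hab
      split_ifs at hab <;> omega
  rw [descNum_eq_card] at hπ'lt
  omega

lemma finite_minimal (d : ℕ) (hd : 1 ≤ d) :
    {x : Σ n : ℕ, Equiv.Perm (Fin n) | MinimalWithDescents d x.2}.Finite := by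
  have hsub : {x : Σ n : ℕ, Equiv.Perm (Fin n) | MinimalWithDescents d x.2} ⊆
      Set.range (fun y : Σ n : Fin (2 * d + 1), Equiv.Perm (Fin (n : ℕ)) =>
        (⟨(y.1 : ℕ), y.2⟩ : Σ n : ℕ, Equiv.Perm (Fin n))) := by
    rintro ⟨n, π⟩ hx
    have hn : n ≤ 2 * d := size_le_of_minimal hd π hx
    exact ⟨⟨⟨n, by omega⟩, π⟩, rfl⟩
  exact Set.Finite.subset (Set.finite_range _) hsub

lemma DLStep_self {n : ℕ} (σ : Equiv.Perm (Fin n)) : DLStep σ σ :=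
  ⟨0, 1, fun _ _ _ _ h => h, fun _ _ _ _ h => h, fun _ => rfl⟩

lemma descNum_le_of_step {n : ℕ} {σ σ' : Equiv.Perm (Fin n)} (h : DLStep σ σ') :
    descNum σ' ≤ 2 * descNum σ + 1 := by
  classical
  obtain ⟨m, τ, h1, h2, h3⟩ := h
  rw [descNum_eq_card, descNum_eq_card]
  set D' := descFinset σ' with hD'
  set S1 := D'.filter (fun i => i + 1 < m) with hS1
  set S2 := D'.filter (fun i => m ≤ i) with hS2
  have hsplit : D' ⊆ (S1 ∪ S2) ∪ {m - 1} := by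
    intro i hi
    simp only [hS1, hS2, Finset.mem_union, Finset.mem_filter, Finset.mem_singleton]
    rcases Nat.lt_or_ge (i + 1) m with h | h
    · exact Or.inl (Or.inl ⟨hi, h⟩)
    · rcases Nat.lt_or_ge i m with h' | h'
      · right; omega
      · exact Or.inl (Or.inr ⟨hi, h'⟩)
  have hc : D'.card ≤ S1.card + S2.card + 1 := by
    calc D'.card ≤ ((S1 ∪ S2) ∪ {m - 1}).card := Finset.card_le_card hsplit
      _ ≤ (S1 ∪ S2).card + ({m - 1} : Finset ℕ).card := Finset.card_union_le _ _
      _ ≤ (S1.card + S2.card) + 1 := by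
          have := Finset.card_union_le S1 S2
          simp only [Finset.card_singleton]
          omega
  set L : ℕ → ℕ := fun i => if h : i < n then (τ ⟨i, h⟩ : ℕ) else 0 with hL
  have hb1 : S1.card ≤ (descFinset σ).card := by
    apply card_le_of_exists_between σ S1 L (fun i => L (i + 1))
    · intro i hi
      obtain ⟨hiD, him⟩ := Finset.mem_filter.mp hi
      obtain ⟨hin, hlt⟩ := mem_descFinset.mp hiD
      have hin' : i < n := by omega
      have hti : τ ⟨i, hin'⟩ < τ ⟨i + 1, hin⟩ :=
        h1 _ _ (by simp; omega) (by simp; omega) (by simp [Fin.lt_def])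
      have hσ : σ (τ ⟨i + 1, hin⟩) < σ (τ ⟨i, hin'⟩) := by
        rw [← h3, ← h3]; exact hlt
      obtain ⟨c, hc1, hc2, hc3⟩ := exists_descent_between σ hti hσ
      refine ⟨c, ?_, ?_, hc3⟩
      · rw [hL]; simp only [hin', dif_pos]; exact hc1
      · rw [hL]; simp only [hin, dif_pos]; exact hc2
    · intro i hi j hj hij
      obtain ⟨hiD, him⟩ := Finset.mem_filter.mp hi
      obtain ⟨hjD, hjm⟩ := Finset.mem_filter.mp hj
      obtain ⟨hin, -⟩ := mem_descFinset.mp hiD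
      obtain ⟨hjn, -⟩ := mem_descFinset.mp hjD
      have hjn' : j < n := by omega
      rw [hL]; simp only [hin, hjn', dif_pos]
      rcases Nat.lt_or_ge (i + 1) j with h | h
      · exact le_of_lt (h1 _ _ (by simp; omega) (by simp; omega) (by simp [Fin.lt_def]; omega))
      · have : i + 1 = j := by omega
        subst this; exact le_refl _
  have hb2 : S2.card ≤ (descFinset σ).card := by
    apply card_le_of_exists_between σ S2 L (fun i => L (i + 1))
    · intro i hi
      obtain ⟨hiD, him⟩ := Finset.mem_filter.mp hi
      obtain ⟨hin, hlt⟩ := mem_descFinset.mp hiD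
      have hin' : i < n := by omega
      have hti : τ ⟨i, hin'⟩ < τ ⟨i + 1, hin⟩ :=
        h2 _ _ (by simp; omega) (by simp; omega) (by simp [Fin.lt_def])
      have hσ : σ (τ ⟨i + 1, hin⟩) < σ (τ ⟨i, hin'⟩) := by
        rw [← h3, ← h3]; exact hlt
      obtain ⟨c, hc1, hc2, hc3⟩ := exists_descent_between σ hti hσ
      refine ⟨c, ?_, ?_, hc3⟩
      · rw [hL]; simp only [hin', dif_pos]; exact hc1
      · rw [hL]; simp only [hin, dif_pos]; exact hc2
    · intro i hi j hj hij
      obtain ⟨hiD, him⟩ := Finset.mem_filter.mp hi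
      obtain ⟨hjD, hjm⟩ := Finset.mem_filter.mp hj
      obtain ⟨hin, -⟩ := mem_descFinset.mp hiD
      obtain ⟨hjn, -⟩ := mem_descFinset.mp hjD
      have hjn' : j < n := by omega
      rw [hL]; simp only [hin, hjn', dif_pos]
      rcases Nat.lt_or_ge (i + 1) j with h | h
      · exact le_of_lt (h2 _ _ (by simp; omega) (by simp; omega) (by simp [Fin.lt_def]; omega))
      · have : i + 1 = j := by omega
        subst this; exact le_refl _
  omega

lemma descNum_lt_of_obtainable {n p : ℕ} (σ : Equiv.Perm (Fin n))
    (h : ObtainableIn p σ) : descNum σ < 2 ^ p := by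
  obtain ⟨q, c, hq, h0, hq', hstep⟩ := h
  have key : ∀ i, i ≤ q → descNum (c i) < 2 ^ i := by
    intro i
    induction i with
    | zero => intro _; rw [h0, descNum_one]; norm_num
    | succ i ih =>
      intro hi
      have hh1 := ih (by omega)
      have hh2 := descNum_le_of_step (hstep i (by omega))
      have hh3 : 2 ^ (i + 1) = 2 * 2 ^ i := by ring
      omega
  have := key q le_rfl
  rw [hq'] at this
  exact lt_of_lt_of_le this (Nat.pow_le_pow_right (by norm_num) hq)

lemma descNum_le_of_tag {n : ℕ} (σ0 : Equiv.Perm (Fin n)) (u : Fin n → ℕ) (B : ℕ)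
    (hmono : ∀ a b : Fin n, a ≤ b → u a ≤ u b)
    (hB : ∀ a, u a ≤ B)
    (hdesc : ∀ (i : ℕ) (h : i + 1 < n),
      σ0 ⟨i + 1, h⟩ < σ0 ⟨i, by omega⟩ → u ⟨i, by omega⟩ < u ⟨i + 1, h⟩) :
    descNum σ0 ≤ B := by
  classical
  rw [descNum_eq_card]
  have hcard : (descFinset σ0).card ≤ (Finset.Icc 1 B).card := by
    apply Finset.card_le_card_of_injOn (fun i => if h : i + 1 < n then u ⟨i + 1, h⟩ else 0)
    · intro i hi
      obtain ⟨h1, h2⟩ := mem_descFinset.mp hi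
      beta_reduce; rw [dif_pos h1]
      have := hdesc i h1 h2
      simp only [Finset.mem_coe, Finset.mem_Icc]
      exact ⟨by omega, hB _⟩
    · intro a ha b hb hab
      rw [Finset.mem_coe] at ha hb
      obtain ⟨ha1, ha2⟩ := mem_descFinset.mp ha
      obtain ⟨hb1, hb2⟩ := mem_descFinset.mp hb
      simp only [ha1, hb1, dif_pos] at hab
      by_contra hne
      rcases lt_or_gt_of_ne hne with h | h
      · have e1 : u ⟨a + 1, ha1⟩ ≤ u ⟨b, by omega⟩ :=
          hmono _ _ (by simp [Fin.le_def]; omega)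
        have e2 := hdesc b hb1 hb2
        omega
      · have e1 : u ⟨b + 1, hb1⟩ ≤ u ⟨a, by omega⟩ :=
          hmono _ _ (by simp [Fin.le_def]; omega)
        have e2 := hdesc a ha1 ha2
        omega
  simpa [Nat.card_Icc] using hcard

lemma exists_step_of_descNum {n : ℕ} (σ' : Equiv.Perm (Fin n)) (B : ℕ)
    (hB : descNum σ' ≤ 2 * B + 1) :
    ∃ σ₀ : Equiv.Perm (Fin n), descNum σ₀ ≤ B ∧ DLStep σ₀ σ' := by
  classical
  set e := descNum σ' with he
  by_cases heB : e ≤ B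
  · exact ⟨σ', heB, DLStep_self σ'⟩
  push_neg at heB
  have he1 : 1 ≤ e := by omega
  have hn : 0 < n := by
    have : (descFinset σ').Nonempty := by
      rw [← Finset.card_pos, ← descNum_eq_card]; omega
    obtain ⟨i, hi⟩ := this
    obtain ⟨h1, -⟩ := mem_descFinset.mp hi
    omega
  set D := descFinset σ' with hD
  have hDcard : D.card = e := (descNum_eq_card σ').symm
  set A : ℕ → ℕ := fun x => (D.filter (fun i => i < x)).card with hA
  have hAmono : Monotone A := by
    intro a b hab
    apply Finset.card_le_card
    intro i hi
    simp only [Finset.mem_filter] at hi ⊢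
    exact ⟨hi.1, by omega⟩
  have hAn : A n = e := by
    simp only [hA]
    rw [← hDcard]
    congr 1
    apply Finset.filter_true_of_mem
    intro i hi
    obtain ⟨h1, -⟩ := mem_descFinset.mp hi
    omega
  set t := (e + 1) / 2 with ht
  have ht1 : 1 ≤ t := by omega
  have hex : ∃ x, t ≤ A x := ⟨n, by rw [hAn]; omega⟩
  set m := Nat.find hex with hm
  have hm1 : t ≤ A m := Nat.find_spec hex
  have hmpos : 1 ≤ m := by
    by_contra hc
    push_neg at hc
    interval_cases m
    · have : A 0 = 0 := by simp [hA]
      omega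
  have hm2 : A (m - 1) < t := by
    have := Nat.find_min hex (show m - 1 < m by omega)
    omega
  -- the tag function
  set r : Fin n → ℕ := fun j =>
    if (j : ℕ) < m then A (j : ℕ)
    else (D.filter (fun i => m ≤ i ∧ i < (j : ℕ))).card with hr
  have hrB : ∀ j, r j ≤ B := by
    intro j
    simp only [hr]
    split_ifs with hj
    · have : A (j : ℕ) ≤ A (m - 1) := hAmono (by omega)
      omega
    · have hsub : D.filter (fun i => m ≤ i ∧ i < (j : ℕ)) ⊆ D.filter (fun i => ¬ i < m) := by
        intro i hi
        simp only [Finset.mem_filter] at hi ⊢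
        exact ⟨hi.1, by omega⟩
      have h1 := Finset.card_le_card hsub
      have h2 : (D.filter (fun i => i < m)).card + (D.filter (fun i => ¬ i < m)).card = D.card := by
        exact Finset.card_filter_add_card_filter_not (p := fun i => i < m)
      have h3 : A m = (D.filter (fun i => i < m)).card := rfl
      omega
  set key : Fin n → ℕ := fun j => n * r j + (σ' j : ℕ) with hkey
  have hdiv : ∀ j, key j / n = r j := by
    intro j
    simp only [hkey]
    rw [Nat.mul_add_div hn, Nat.div_eq_of_lt (σ' j).is_lt]
    omega
  have hkeyinj : Function.Injective key := by
    intro a b hab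
    have h1 : r a = r b := by rw [← hdiv a, ← hdiv b, hab]
    simp only [hkey] at hab
    rw [h1] at hab
    have h2 : (σ' a : ℕ) = (σ' b : ℕ) := by omega
    exact σ'.injective (Fin.ext h2)
  -- key is strictly increasing on each of the two blocks
  have main : ∀ a b : Fin n, a < b → ((b : ℕ) < m ∨ m ≤ (a : ℕ)) → key a < key b := by
    intro a b hab hcase
    have hab' : (a : ℕ) < (b : ℕ) := hab
    have hrle : r a ≤ r b := by
      simp only [hr]
      rcases hcase with hc | hc
      · rw [if_pos (by omega), if_pos hc]
        exact hAmono (by omega)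
      · rw [if_neg (by omega), if_neg (by omega)]
        apply Finset.card_le_card
        intro i hi
        simp only [Finset.mem_filter] at hi ⊢
        exact ⟨hi.1, hi.2.1, by omega⟩
    rcases eq_or_lt_of_le hrle with hreq | hrlt
    · -- equal tags: no descent between a and b, so σ' a < σ' b
      have hnd : ∀ c, (a : ℕ) ≤ c → c < (b : ℕ) → ¬ IsDescentAt σ' c := by
        intro c hc1 hc2 hcd
        have hcD : c ∈ D := mem_descFinset.mpr hcd
        rcases hcase with hcc | hcc
        · have hreq' : A (a : ℕ) = A (b : ℕ) := by
            have e1 : r a = A (a : ℕ) := by simp only [hr]; rw [if_pos (by omega)]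
            have e2 : r b = A (b : ℕ) := by simp only [hr]; rw [if_pos hcc]
            rw [← e1, ← e2, hreq]
          have hsub : D.filter (fun i => i < (a : ℕ)) ⊆ D.filter (fun i => i < (b : ℕ)) := by
            intro i hi
            simp only [Finset.mem_filter] at hi ⊢
            exact ⟨hi.1, by omega⟩
          have heqset := Finset.eq_of_subset_of_card_le hsub (le_of_eq hreq'.symm)
          have : c ∈ D.filter (fun i => i < (b : ℕ)) := by
            simp only [Finset.mem_filter]; exact ⟨hcD, hc2⟩
          rw [← heqset] at this
          simp only [Finset.mem_filter] at this
          omega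
        · have e1 : r a = (D.filter (fun i => m ≤ i ∧ i < (a : ℕ))).card := by
            simp only [hr]; rw [if_neg (by omega)]
          have e2 : r b = (D.filter (fun i => m ≤ i ∧ i < (b : ℕ))).card := by
            simp only [hr]; rw [if_neg (by omega)]
          have hsub : D.filter (fun i => m ≤ i ∧ i < (a : ℕ)) ⊆
              D.filter (fun i => m ≤ i ∧ i < (b : ℕ)) := by
            intro i hi
            simp only [Finset.mem_filter] at hi ⊢
            exact ⟨hi.1, hi.2.1, by omega⟩
          have hreq' : (D.filter (fun i => m ≤ i ∧ i < (a : ℕ))).card =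
              (D.filter (fun i => m ≤ i ∧ i < (b : ℕ))).card := by
            rw [← e1, ← e2, hreq]
          have heqset := Finset.eq_of_subset_of_card_le hsub (le_of_eq hreq'.symm)
          have : c ∈ D.filter (fun i => m ≤ i ∧ i < (b : ℕ)) := by
            simp only [Finset.mem_filter]; exact ⟨hcD, by omega, hc2⟩
          rw [← heqset] at this
          simp only [Finset.mem_filter] at this
          omega
      have hv : (σ' a : ℕ) < (σ' b : ℕ) := lt_of_no_descent σ' hab hnd
      simp only [hkey]
      rw [hreq]
      exact Nat.add_lt_add_left hv _
    · simp only [hkey]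
      calc n * r a + (σ' a : ℕ) < n * r a + n := Nat.add_lt_add_left (σ' a).is_lt _
        _ = n * (r a + 1) := by ring
        _ ≤ n * r b := Nat.mul_le_mul_left n hrlt
        _ ≤ n * r b + (σ' b : ℕ) := Nat.le_add_right _ _
  set φ := Tuple.sort key with hφ
  have hkm : Monotone (key ∘ φ) := Tuple.monotone_sort key
  have hksm : StrictMono (key ∘ φ) := hkm.strictMono_of_injective (hkeyinj.comp φ.injective)
  refine ⟨σ' * φ, ?_, m, φ⁻¹, ?_, ?_, ?_⟩
  · -- descent bound via the tag u = r ∘ φ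
    apply descNum_le_of_tag (σ' * φ) (fun a => key (φ a) / n) B
    · intro a b hab
      exact Nat.div_le_div_right (hkm hab)
    · intro a
      rw [hdiv]
      exact hrB _
    · intro i hi hlt
      have h1 : key (φ ⟨i, by omega⟩) ≤ key (φ ⟨i + 1, hi⟩) :=
        hkm (show (⟨i, by omega⟩ : Fin n) ≤ ⟨i + 1, hi⟩ by simp [Fin.le_def])
      rw [hdiv, hdiv]
      rcases eq_or_lt_of_le (Nat.div_le_div_right (c := n) h1) with hreq | hrlt
      · exfalso
        rw [hdiv, hdiv] at hreq
        simp only [hkey] at h1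
        rw [hreq] at h1
        have h2 : (σ' (φ ⟨i, by omega⟩) : ℕ) ≤ (σ' (φ ⟨i + 1, hi⟩) : ℕ) :=
          Nat.le_of_add_le_add_left h1
        have h3 : (σ' (φ ⟨i + 1, hi⟩) : ℕ) < (σ' (φ ⟨i, by omega⟩) : ℕ) := by
          have hh := hlt
          rw [Equiv.Perm.mul_apply, Equiv.Perm.mul_apply] at hh
          exact hh
        omega
      · rw [hdiv, hdiv] at hrlt
        exact hrlt
  · intro i j hi hj hij
    have hk : key i < key j := main i j hij (Or.inl hj)
    have := hksm.lt_iff_lt (a := φ⁻¹ i) (b := φ⁻¹ j)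
    simp only [Function.comp_apply, Equiv.Perm.inv_def, Equiv.apply_symm_apply] at this
    exact this.mp hk
  · intro i j hi hj hij
    have hk : key i < key j := main i j hij (Or.inr hi)
    have := hksm.lt_iff_lt (a := φ⁻¹ i) (b := φ⁻¹ j)
    simp only [Function.comp_apply, Equiv.Perm.inv_def, Equiv.apply_symm_apply] at this
    exact this.mp hk
  · intro i
    rw [Equiv.Perm.mul_apply, Equiv.Perm.inv_def, Equiv.apply_symm_apply]

lemma obtainable_of_descNum_lt {n : ℕ} :
    ∀ (p : ℕ) (σ : Equiv.Perm (Fin n)), descNum σ < 2 ^ p → ObtainableIn p σ := by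
  intro p
  induction p with
  | zero =>
    intro σ h
    have h0 : descNum σ = 0 := by simpa using h
    have := eq_one_of_descNum_zero σ h0
    subst this
    exact ⟨0, fun _ => 1, le_refl _, rfl, rfl, fun i hi => absurd hi (by omega)⟩
  | succ p ih =>
    intro σ h
    have h2p : 1 ≤ 2 ^ p := Nat.one_le_two_pow
    have hpow : 2 ^ (p + 1) = 2 * 2 ^ p := by ring
    obtain ⟨σ₀, hσ₀, hstep⟩ := exists_step_of_descNum σ (2 ^ p - 1) (by omega)
    obtain ⟨q, c, hq, h0, hq', hsteps⟩ := ih σ₀ (by omega)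
    refine ⟨q + 1, fun i => if i ≤ q then c i else σ, by omega, ?_, ?_, ?_⟩
    · show (if 0 ≤ q then c 0 else σ) = 1
      rw [if_pos (Nat.zero_le q)]
      exact h0
    · show (if q + 1 ≤ q then c (q + 1) else σ) = σ
      rw [if_neg (by omega)]
    · intro i hi
      show DLStep (if i ≤ q then c i else σ) (if i + 1 ≤ q then c (i + 1) else σ)
      rcases Nat.lt_or_ge i q with h1 | h1
      · rw [if_pos (by omega), if_pos (by omega)]
        exact hsteps i h1
      · have hiq : i = q := by omega
        subst hiq
        rw [if_pos (le_refl _), if_neg (by omega), hq']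
        exact hstep

/-- For `d = 2 ^ p`: a permutation is obtainable in at most `p` steps in the whole genome
duplication - random loss model if and only if it avoids every minimal permutation with
`d` descents; moreover the set `B_d` of minimal permutations with `d` descents is finite. -/
theorem obtainable_iff_avoids_minimal_and_finite (p d : ℕ) (hd : d = 2 ^ p) :
    (∀ (n : ℕ) (σ : Equiv.Perm (Fin n)),
      ObtainableIn p σ ↔
        ∀ (k : ℕ) (π : Equiv.Perm (Fin k)), MinimalWithDescents d π → ¬ IsPattern π σ) ∧
    {x : Σ n : ℕ, Equiv.Perm (Fin n) | MinimalWithDescents d x.2}.Finite := by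
  subst hd
  have hd1 : 1 ≤ 2 ^ p := Nat.one_le_two_pow
  constructor
  · intro n σ
    constructor
    · intro hobt k π hmin hpat
      have h1 := descNum_lt_of_obtainable σ hobt
      have h2 : descNum π ≤ descNum σ := descNum_le_of_pattern hpat
      rw [hmin.1] at h2
      omega
    · intro havoid
      apply obtainable_of_descNum_lt
      by_contra hcon
      push_neg at hcon
      obtain ⟨k, π, hmin, hpat⟩ := exists_minimal_pattern σ hcon
      exact havoid k π hmin hpat
  · exact finite_minimal _ hd1
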